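/- arXiv:1802.07153 — 2 statements merged into one kernel-verified Lean document; each statement's English description precedes it below -/
import Mathlib

section
/- Let k ≥ 1 and n ≥ 1 be integers, and let A_1, …, A_n be linear subspaces of ℂ^k satisfying: for every nonempty subset I ⊆ {1, …, n} and every choice of vectors a^{(i)} ∈ A_i for each i ∈ I, one has ∑_{j=1}^{k} ∏_{i ∈ I} a^{(i)}_j = 0, where a^{(i)}_j denotes the j-th coordinate of a^{(i)}. Then ∑_{i=1}^{n} dim A_i ≤ k − 1. -/
open Finset Module

namespace SumDim

variable {k n : ℕ}

def mask (k : ℕ) (K : Finset (Fin k)) : (Fin k → ℂ) →ₗ[ℂ] (Fin k → ℂ) where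
  toFun a := fun j => if j ∈ K then a j else 0
  map_add' a b := by funext j; by_cases h : j ∈ K <;> simp [h]
  map_smul' c a := by funext j; by_cases h : j ∈ K <;> simp [h]

@[simp] lemma mask_apply (K : Finset (Fin k)) (a : Fin k → ℂ) (j : Fin k) :
    mask k K a j = if j ∈ K then a j else 0 := rfl

lemma mask_mask {K K' : Finset (Fin k)} (h : K ⊆ K') (a : Fin k → ℂ) :
    mask k K (mask k K' a) = mask k K a := by
  funext j
  by_cases hj : j ∈ K
  · simp [hj, h hj]
  · simp [hj]

lemma mask_comp {K K' : Finset (Fin k)} (h : K ⊆ K') :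
    (mask k K).comp (mask k K') = mask k K :=
  LinearMap.ext fun a => mask_mask h a

lemma mask_fix {Z : Finset (Fin k)} {A : Submodule ℂ (Fin k → ℂ)} {v : Fin k → ℂ}
    (hv : v ∈ A.map (mask k Z)) : mask k Z v = v := by
  obtain ⟨a, -, rfl⟩ := hv
  exact mask_mask (subset_refl Z) a

lemma map_mask_mask {K K' : Finset (Fin k)} (h : K ⊆ K') (A : Submodule ℂ (Fin k → ℂ)) :
    (A.map (mask k K')).map (mask k K) = A.map (mask k K) := by
  rw [← Submodule.map_comp, mask_comp h]

lemma finrank_map_add_inf_ker {V V' : Type*} [AddCommGroup V] [Module ℂ V]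
    [AddCommGroup V'] [Module ℂ V'] [FiniteDimensional ℂ V]
    (W : Submodule ℂ V) (m : V →ₗ[ℂ] V') :
    finrank ℂ (W.map m) + finrank ℂ (W ⊓ LinearMap.ker m : Submodule ℂ V) = finrank ℂ W := by
  have h := LinearMap.finrank_range_add_finrank_ker (m.comp W.subtype)
  have h1 : LinearMap.range (m.comp W.subtype) = W.map m := by
    rw [LinearMap.range_comp, Submodule.range_subtype]
  have h2 : LinearMap.ker (m.comp W.subtype) = (W ⊓ LinearMap.ker m).comap W.subtype := by
    rw [LinearMap.ker_comp]
    ext x; simp [x.2]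
  have h3 : finrank ℂ (LinearMap.ker (m.comp W.subtype)) =
      finrank ℂ (W ⊓ LinearMap.ker m : Submodule ℂ V) := by
    rw [h2]
    exact (Submodule.comapSubtypeEquivOfLe (inf_le_left : W ⊓ LinearMap.ker m ≤ W)).finrank_eq
  rw [h1, h3] at h
  exact h

noncomputable def rnk (A : Submodule ℂ (Fin k → ℂ)) (K : Finset (Fin k)) : ℕ :=
  finrank ℂ (A.map (mask k K) : Submodule ℂ (Fin k → ℂ))

lemma rnk_empty (A : Submodule ℂ (Fin k → ℂ)) : rnk A ∅ = 0 := by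
  have : mask k ∅ = 0 := by apply LinearMap.ext; intro a; funext j; simp
  rw [rnk, this, Submodule.map_zero]
  simp

lemma rnk_mono (A : Submodule ℂ (Fin k → ℂ)) {K K' : Finset (Fin k)} (h : K ⊆ K') :
    rnk A K ≤ rnk A K' := by
  rw [rnk, rnk, ← map_mask_mask h A]
  exact Submodule.finrank_map_le _ _

lemma rnk_submodular (A : Submodule ℂ (Fin k → ℂ)) (K K' : Finset (Fin k)) :
    rnk A (K ∪ K') + rnk A (K ∩ K') ≤ rnk A K + rnk A K' := by
  set W : Submodule ℂ (Fin k → ℂ) := A.map (mask k (K ∪ K')) with hW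
  have eK : A.map (mask k K) = W.map (mask k K) := (map_mask_mask subset_union_left A).symm
  have eK' : A.map (mask k K') = W.map (mask k K') := (map_mask_mask subset_union_right A).symm
  have eI : (W.map (mask k K')).map (mask k (K ∩ K')) = A.map (mask k (K ∩ K')) := by
    rw [← eK', map_mask_mask inter_subset_right A]
  have h1 := finrank_map_add_inf_ker W (mask k K)
  have h2 := finrank_map_add_inf_ker (W.map (mask k K')) (mask k (K ∩ K'))
  have hN : (W ⊓ LinearMap.ker (mask k K) : Submodule ℂ (Fin k → ℂ)) ≤
      (W.map (mask k K')) ⊓ LinearMap.ker (mask k (K ∩ K')) := by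
    rintro v ⟨hvW, hvK⟩
    have hvK : mask k K v = 0 := hvK
    have hfix : mask k (K ∪ K') v = v := mask_fix hvW
    have hvj : ∀ j, j ∉ K' → v j = 0 := by
      intro j hj
      by_cases hjK : j ∈ K
      · have := congrFun hvK j
        simpa [hjK] using this
      · have := congrFun hfix j
        have hju : j ∉ K ∪ K' := by simp [hjK, hj]
        simpa [hju] using this.symm
    constructor
    · refine Submodule.mem_map.mpr ⟨v, hvW, ?_⟩
      funext j
      by_cases hj : j ∈ K'
      · simp [hj]
      · simp [hj, (hvj j hj).symm]
    · show mask k (K ∩ K') v = 0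
      funext j
      by_cases hj : j ∈ K ∩ K'
      · have : v j = 0 := by
          have := congrFun hvK j
          simpa [mem_of_mem_inter_left hj] using this
        simp [hj, this]
      · simp [hj]
  have hle : finrank ℂ (W ⊓ LinearMap.ker (mask k K) : Submodule ℂ (Fin k → ℂ)) ≤
      finrank ℂ ((W.map (mask k K')) ⊓ LinearMap.ker (mask k (K ∩ K')) :
        Submodule ℂ (Fin k → ℂ)) := Submodule.finrank_mono hN
  rw [rnk, rnk, rnk, rnk, eK, eK', ← eI, ← hW]
  omega


lemma rado_base (hn : 0 < n) (r : Fin n → Finset (Fin k) → ℕ)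
    (hempty : ∀ i, r i ∅ = 0)
    (X : Finset (Fin k)) (S : Fin k → Finset (Fin n))
    (hall : ∀ x ∈ X, (S x).card ≤ 1)
    (hcond : ∀ K ⊆ X, K.card ≤ ∑ i, r i (K.filter (fun x => i ∈ S x))) :
    ∃ f : Fin k → Fin n, (∀ x ∈ X, f x ∈ S x) ∧
      ∀ i, (X.filter (fun x => f x = i)).card ≤ r i (X.filter (fun x => f x = i)) := by
  have hne : ∀ x, x ∈ X → ∃ i : Fin n, S x = {i} := by
    intro x hx
    rw [← Finset.card_eq_one]
    have h1 := hcond {x} (by simpa using hx)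
    by_contra hcard
    have h0 : (S x).card = 0 := by
      have := hall x hx; omega
    have hSx : S x = ∅ := Finset.card_eq_zero.mp h0
    have : ∀ i : Fin n, ({x} : Finset (Fin k)).filter (fun y => i ∈ S y) = ∅ := by
      intro i
      apply Finset.filter_false_of_mem
      intro y hy
      rw [Finset.mem_singleton.mp hy, hSx]
      simp
    simp only [this, hempty, Finset.sum_const_zero, Finset.card_singleton] at h1
    omega
  choose g hg using hne
  set f : Fin k → Fin n := fun x => if hx : x ∈ X then g x hx else ⟨0, hn⟩ with hf
  have hfS : ∀ x ∈ X, f x ∈ S x := by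
    intro x hx
    rw [hf]; simp only [dif_pos hx]
    rw [hg x hx]; exact Finset.mem_singleton_self _
  refine ⟨f, hfS, ?_⟩
  intro i
  set K := X.filter (fun x => f x = i) with hK
  have hSK : ∀ x ∈ K, S x = {i} := by
    intro x hx
    rw [hK, Finset.mem_filter] at hx
    obtain ⟨hxX, hfx⟩ := hx
    have : f x = g x hxX := by rw [hf]; simp [dif_pos hxX]
    rw [hg x hxX, ← this, hfx]
  have h1 := hcond K (Finset.filter_subset _ _)
  have h2 : ∀ j : Fin n, j ≠ i → r j (K.filter (fun x => j ∈ S x)) = 0 := by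
    intro j hj
    have : K.filter (fun x => j ∈ S x) = ∅ := by
      apply Finset.filter_false_of_mem
      intro x hx
      rw [hSK x hx]
      simp [hj]
    rw [this, hempty]
  have h3 : K.filter (fun x => i ∈ S x) = K := by
    apply Finset.filter_true_of_mem
    intro x hx
    rw [hSK x hx]; simp
  calc K.card ≤ ∑ j, r j (K.filter (fun x => j ∈ S x)) := h1
    _ = r i (K.filter (fun x => i ∈ S x)) := by
        apply Finset.sum_eq_single_of_mem i (Finset.mem_univ i)
        intro j _ hj; exact h2 j hj
    _ = r i K := by rw [h3]



lemma rado (hn : 0 < n) (r : Fin n → Finset (Fin k) → ℕ)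
    (hempty : ∀ i, r i ∅ = 0)
    (hmono : ∀ (i : Fin n) (K K' : Finset (Fin k)), K ⊆ K' → r i K ≤ r i K')
    (hsub : ∀ (i : Fin n) (K K' : Finset (Fin k)),
      r i (K ∪ K') + r i (K ∩ K') ≤ r i K + r i K')
    (X : Finset (Fin k)) :
    ∀ (N : ℕ) (S : Fin k → Finset (Fin n)), (∑ x ∈ X, (S x).card ≤ N) →
    (∀ K ⊆ X, K.card ≤ ∑ i, r i (K.filter (fun x => i ∈ S x))) →
    ∃ f : Fin k → Fin n, (∀ x ∈ X, f x ∈ S x) ∧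
      ∀ i, (X.filter (fun x => f x = i)).card ≤ r i (X.filter (fun x => f x = i)) := by
  intro N
  induction N with
  | zero =>
    intro S hm hcond
    apply rado_base hn r hempty X S _ hcond
    intro x hx
    have h0 : ∀ x ∈ X, (S x).card = 0 :=
      Finset.sum_eq_zero_iff.mp (Nat.le_zero.mp hm)
    rw [h0 x hx]; omega
  | succ N ih =>
    intro S hm hcond
    by_cases hall : ∀ x ∈ X, (S x).card ≤ 1
    · exact rado_base hn r hempty X S hall hcond
    push_neg at hall
    obtain ⟨x₀, hx₀X, hcard⟩ := hall
    obtain ⟨i₁, hi₁, i₂, hi₂, hne12⟩ := Finset.one_lt_card.mp hcard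
    set upd : Fin n → Fin k → Finset (Fin n) :=
      fun d => Function.update S x₀ ((S x₀).erase d) with hupd
    have hupd_ne : ∀ (d : Fin n) (x : Fin k), x ≠ x₀ → upd d x = S x := by
      intro d x hx
      rw [hupd]; exact Function.update_of_ne hx _ _
    have hupd_self : ∀ d : Fin n, upd d x₀ = (S x₀).erase d := by
      intro d; rw [hupd]; exact Function.update_self _ _ _
    have hmupd : ∀ d ∈ S x₀, ∑ x ∈ X, ((upd d) x).card ≤ N := by
      intro d hd
      have e1 : ∑ x ∈ X, ((upd d) x).card
          = ∑ x ∈ X \ {x₀}, ((upd d) x).card + ((upd d) x₀).card :=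
        Finset.sum_eq_sum_sdiff_singleton_add hx₀X _
      have e2 : ∑ x ∈ X, (S x).card
          = ∑ x ∈ X \ {x₀}, (S x).card + (S x₀).card :=
        Finset.sum_eq_sum_sdiff_singleton_add hx₀X _
      have e3 : ∑ x ∈ X \ {x₀}, ((upd d) x).card = ∑ x ∈ X \ {x₀}, (S x).card := by
        apply Finset.sum_congr rfl
        intro x hx
        rw [hupd_ne d x (by aesop)]
      have e4 : ((upd d) x₀).card + 1 = (S x₀).card := by
        rw [hupd_self]; exact Finset.card_erase_add_one hd
      omega
    by_cases hc1 : ∀ K ⊆ X, K.card ≤ ∑ i, r i (K.filter (fun x => i ∈ upd i₁ x))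
    · obtain ⟨f, hf, hblocks⟩ := ih (upd i₁) (hmupd i₁ hi₁) hc1
      refine ⟨f, fun x hx => ?_, hblocks⟩
      by_cases hxx : x = x₀
      · subst hxx
        have := hf x hx
        rw [hupd_self] at this
        exact Finset.erase_subset _ _ this
      · have := hf x hx
        rwa [hupd_ne i₁ x hxx] at this
    by_cases hc2 : ∀ K ⊆ X, K.card ≤ ∑ i, r i (K.filter (fun x => i ∈ upd i₂ x))
    · obtain ⟨f, hf, hblocks⟩ := ih (upd i₂) (hmupd i₂ hi₂) hc2
      refine ⟨f, fun x hx => ?_, hblocks⟩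
      by_cases hxx : x = x₀
      · subst hxx
        have := hf x hx
        rw [hupd_self] at this
        exact Finset.erase_subset _ _ this
      · have := hf x hx
        rwa [hupd_ne i₂ x hxx] at this
    exfalso
    push_neg at hc1 hc2
    obtain ⟨K₁, hK₁X, hK₁⟩ := hc1
    obtain ⟨K₂, hK₂X, hK₂⟩ := hc2
    have hx₀K : ∀ (d : Fin n) (K : Finset (Fin k)), K ⊆ X →
        (∑ i, r i (K.filter (fun x => i ∈ upd d x)) < K.card) → x₀ ∈ K := by
      intro d K hKX hK
      by_contra hx
      have heq : ∀ i : Fin n, K.filter (fun x => i ∈ upd d x) = K.filter (fun x => i ∈ S x) := by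
        intro i
        apply Finset.filter_congr
        intro x hxK
        rw [hupd_ne d x (by rintro rfl; exact hx hxK)]
      rw [Finset.sum_congr rfl (fun i _ => by rw [heq i])] at hK
      exact absurd (hcond K hKX) (not_le.mpr hK)
    have hx₀K₁ : x₀ ∈ K₁ := hx₀K i₁ K₁ hK₁X hK₁
    have hx₀K₂ : x₀ ∈ K₂ := hx₀K i₂ K₂ hK₂X hK₂
    set Af : Fin n → Finset (Fin k) := fun i => K₁.filter (fun x => i ∈ upd i₁ x) with hAf
    set Bf : Fin n → Finset (Fin k) := fun i => K₂.filter (fun x => i ∈ upd i₂ x) with hBf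
    have hU : ∀ i, (K₁ ∪ K₂).filter (fun x => i ∈ S x) ⊆ Af i ∪ Bf i := by
      intro i x hx
      rw [Finset.mem_filter] at hx
      obtain ⟨hxU, hiS⟩ := hx
      by_cases hxx : x = x₀
      · subst hxx
        by_cases hii : i = i₁
        · subst hii
          apply Finset.mem_union_right
          rw [hBf]; rw [Finset.mem_filter]
          exact ⟨hx₀K₂, by rw [hupd_self]; exact Finset.mem_erase.mpr ⟨hne12, hiS⟩⟩
        · apply Finset.mem_union_left
          rw [hAf]; rw [Finset.mem_filter]
          exact ⟨hx₀K₁, by rw [hupd_self]; exact Finset.mem_erase.mpr ⟨hii, hiS⟩⟩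
      · rcases Finset.mem_union.mp hxU with hx1 | hx2
        · apply Finset.mem_union_left
          rw [hAf]; rw [Finset.mem_filter]
          exact ⟨hx1, by rwa [hupd_ne i₁ x hxx]⟩
        · apply Finset.mem_union_right
          rw [hBf]; rw [Finset.mem_filter]
          exact ⟨hx2, by rwa [hupd_ne i₂ x hxx]⟩
    have hI : ∀ i, ((K₁ ∩ K₂).erase x₀).filter (fun x => i ∈ S x) ⊆ Af i ∩ Bf i := by
      intro i x hx
      rw [Finset.mem_filter] at hx
      obtain ⟨hxe, hiS⟩ := hx
      obtain ⟨hxne, hxI⟩ := Finset.mem_erase.mp hxe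
      rw [Finset.mem_inter] at hxI ⊢
      constructor
      · rw [hAf, Finset.mem_filter]
        exact ⟨hxI.1, by rwa [hupd_ne i₁ x hxne]⟩
      · rw [hBf, Finset.mem_filter]
        exact ⟨hxI.2, by rwa [hupd_ne i₂ x hxne]⟩
    have c1 := hcond (K₁ ∪ K₂) (Finset.union_subset hK₁X hK₂X)
    have c2 := hcond ((K₁ ∩ K₂).erase x₀)
      ((Finset.erase_subset _ _).trans ((Finset.inter_subset_left).trans hK₁X))
    have step : ∀ i : Fin n,
        r i ((K₁ ∪ K₂).filter (fun x => i ∈ S x))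
          + r i (((K₁ ∩ K₂).erase x₀).filter (fun x => i ∈ S x))
        ≤ r i (Af i) + r i (Bf i) := by
      intro i
      calc r i ((K₁ ∪ K₂).filter (fun x => i ∈ S x))
            + r i (((K₁ ∩ K₂).erase x₀).filter (fun x => i ∈ S x))
          ≤ r i (Af i ∪ Bf i) + r i (Af i ∩ Bf i) :=
            Nat.add_le_add (hmono i _ _ (hU i)) (hmono i _ _ (hI i))
        _ ≤ r i (Af i) + r i (Bf i) := hsub i _ _
    have hsumstep : ∑ i, r i ((K₁ ∪ K₂).filter (fun x => i ∈ S x))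
        + ∑ i, r i (((K₁ ∩ K₂).erase x₀).filter (fun x => i ∈ S x))
        ≤ ∑ i, r i (Af i) + ∑ i, r i (Bf i) := by
      rw [← Finset.sum_add_distrib, ← Finset.sum_add_distrib]
      exact Finset.sum_le_sum (fun i _ => step i)
    have hcards : (K₁ ∪ K₂).card + (K₁ ∩ K₂).card = K₁.card + K₂.card :=
      Finset.card_union_add_card_inter K₁ K₂
    have herase : ((K₁ ∩ K₂).erase x₀).card + 1 = (K₁ ∩ K₂).card :=
      Finset.card_erase_add_one (Finset.mem_inter.mpr ⟨hx₀K₁, hx₀K₂⟩)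
    have eA : ∑ i, r i (Af i) = ∑ i, r i (K₁.filter (fun x => i ∈ upd i₁ x)) := rfl
    have eB : ∑ i, r i (Bf i) = ∑ i, r i (K₂.filter (fun x => i ∈ upd i₂ x)) := rfl
    omega


noncomputable def sgl (k : ℕ) (j : Fin k) : Fin k → ℂ := Pi.single j 1

@[simp] lemma sgl_apply (j x : Fin k) : sgl k j x = if x = j then 1 else 0 := by
  rw [sgl, Pi.single_apply]

lemma sgl_li : LinearIndependent ℂ (sgl k) := by
  have e : sgl k = fun j => (Pi.basisFun ℂ (Fin k)) j := by
    funext j; rw [Pi.basisFun_apply]; rfl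
  rw [e]; exact (Pi.basisFun ℂ (Fin k)).linearIndependent

lemma span_sgl_finrank (Xi : Finset (Fin k)) :
    finrank ℂ (Submodule.span ℂ (sgl k '' ↑Xi)) = Xi.card := by
  have h : LinearIndependent ℂ (fun j : ↥Xi => sgl k (j : Fin k)) :=
    sgl_li.comp Subtype.val Subtype.val_injective
  have e : Set.range (fun j : ↥Xi => sgl k (j : Fin k)) = sgl k '' ↑Xi := by
    ext v; simp [Set.mem_image, Set.mem_range]
  rw [← e, finrank_span_eq_card h]
  simp

lemma sum_sgl (Xi : Finset (Fin k)) (c : Fin k → ℂ) (x : Fin k) :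
    (∑ j ∈ Xi, c j • sgl k j) x = if x ∈ Xi then c x else 0 := by
  rw [Finset.sum_apply]
  simp only [Pi.smul_apply, sgl_apply, smul_eq_mul, mul_ite, mul_one, mul_zero]
  rw [Finset.sum_ite_eq Xi x c]


lemma exists_neg_one (A : Submodule ℂ (Fin k → ℂ)) (Xi : Finset (Fin k))
    (h : Xi.card ≤ rnk A Xi) : ∃ a ∈ A, ∀ x ∈ Xi, a x = -1 := by
  set P := Submodule.span ℂ (sgl k '' ↑Xi) with hP
  have hle : A.map (mask k Xi) ≤ P := by
    rintro v ⟨a, ha, rfl⟩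
    have hv : mask k Xi a = ∑ j ∈ Xi, a j • sgl k j := by
      funext x
      rw [sum_sgl]
      simp [mask_apply]
    rw [hv]
    exact Submodule.sum_mem _ (fun j hj => Submodule.smul_mem _ _
      (Submodule.subset_span ⟨j, by simpa using hj, rfl⟩))
  have heq : A.map (mask k Xi) = P := by
    apply Submodule.eq_of_le_of_finrank_le hle
    rw [hP, span_sgl_finrank]
    exact h
  have hχ : (∑ j ∈ Xi, (-1 : ℂ) • sgl k j) ∈ A.map (mask k Xi) := by
    rw [heq]
    exact Submodule.sum_mem _ (fun j hj => Submodule.smul_mem _ _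
      (Submodule.subset_span ⟨j, by simpa using hj, rfl⟩))
  obtain ⟨a, ha, haeq⟩ := hχ
  refine ⟨a, ha, fun x hx => ?_⟩
  have := congrFun haeq x
  rw [sum_sgl] at this
  simpa [hx] using this

lemma master (hn : 1 ≤ n) :
    ∀ (m : ℕ) (S : Finset (Fin k)), S.card ≤ m → S.Nonempty →
    ∀ A : Fin n → Submodule ℂ (Fin k → ℂ),
    (∀ i, ∀ a ∈ A i, ∀ x, x ∉ S → a x = 0) →
    (∀ (I : Finset (Fin n)), I.Nonempty → ∀ a : Fin n → (Fin k → ℂ),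
      (∀ i ∈ I, a i ∈ A i) → ∑ j : Fin k, ∏ i ∈ I, a i j = 0) →
    ∑ i : Fin n, finrank ℂ (A i) ≤ S.card - 1 := by
  intro m
  induction m with
  | zero =>
    intro S hcard hSne
    exact absurd (Finset.card_pos.mpr hSne) (by omega)
  | succ m ih =>
    intro S hcard hSne A hsupp hA
    by_contra hcon
    have hS1 : 1 ≤ S.card := Finset.card_pos.mpr hSne
    have hbig : S.card ≤ ∑ i : Fin n, finrank ℂ (A i) := by omega
    have hrn : ∀ (i : Fin n) (Y : Finset (Fin k)),
        rnk (A i) Y + finrank ℂ ((A i) ⊓ LinearMap.ker (mask k Y) : Submodule ℂ (Fin k → ℂ))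
          = finrank ℂ (A i) :=
      fun i Y => finrank_map_add_inf_ker (A i) (mask k Y)
    have hBsupp : ∀ (i : Fin n) (Y : Finset (Fin k)),
        ∀ a ∈ ((A i) ⊓ LinearMap.ker (mask k Y) : Submodule ℂ (Fin k → ℂ)),
        ∀ x, x ∉ S \ Y → a x = 0 := by
      intro i Y a ha x hx
      obtain ⟨haA, haK⟩ := Submodule.mem_inf.mp ha
      rw [Finset.mem_sdiff] at hx
      push_neg at hx
      by_cases hxY : x ∈ Y
      · have := congrFun (show mask k Y a = 0 from haK) x
        simpa [hxY] using this
      · exact hsupp i a haA x (fun hxS => hxY (hx hxS))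
    have key : ∀ Y : Finset (Fin k), Y ⊆ S → Y.Nonempty → Y ≠ S →
        Y.card + 1 ≤ ∑ i : Fin n, rnk (A i) Y := by
      intro Y hYS hYne hYneq
      have hdiff_ne : (S \ Y).Nonempty := by
        rw [Finset.sdiff_nonempty]
        intro hSY
        exact hYneq (Finset.Subset.antisymm hYS hSY)
      have hdcard : (S \ Y).card + Y.card = S.card := Finset.card_sdiff_add_card_eq_card hYS
      have hYc : 1 ≤ Y.card := Finset.card_pos.mpr hYne
      have hdm : (S \ Y).card ≤ m := by omega
      have hrec := ih (S \ Y) hdm hdiff_ne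
        (fun i => (A i) ⊓ LinearMap.ker (mask k Y))
        (fun i => hBsupp i Y)
        (fun I hI a ha => hA I hI a (fun i hi => (Submodule.mem_inf.mp (ha i hi)).1))
      have hrec2 : ∑ i : Fin n, finrank ℂ
          ((A i) ⊓ LinearMap.ker (mask k Y) : Submodule ℂ (Fin k → ℂ)) ≤ (S \ Y).card - 1 :=
        hrec
      have hsum : ∑ i : Fin n, rnk (A i) Y
          + ∑ i : Fin n, finrank ℂ ((A i) ⊓ LinearMap.ker (mask k Y) : Submodule ℂ (Fin k → ℂ))
          = ∑ i : Fin n, finrank ℂ (A i) := by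
        rw [← Finset.sum_add_distrib]
        exact Finset.sum_congr rfl (fun i _ => hrn i Y)
      have hd1 : 1 ≤ (S \ Y).card := Finset.card_pos.mpr hdiff_ne
      omega
    have keyS : ∑ i : Fin n, rnk (A i) S = ∑ i : Fin n, finrank ℂ (A i) := by
      apply Finset.sum_congr rfl
      intro i _
      have hbot : ((A i) ⊓ LinearMap.ker (mask k S) : Submodule ℂ (Fin k → ℂ)) = ⊥ := by
        rw [Submodule.eq_bot_iff]
        intro a ha
        obtain ⟨haA, haK⟩ := Submodule.mem_inf.mp ha
        funext x
        by_cases hxS : x ∈ S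
        · have := congrFun (show mask k S a = 0 from haK) x
          simpa [hxS] using this
        · exact hsupp i a haA x hxS
      have := hrn i S
      rw [hbot] at this
      simpa using this
    have hcond : ∀ K ⊆ S, K.card ≤ ∑ i : Fin n, rnk (A i) K := by
      intro K hKS
      rcases Finset.eq_empty_or_nonempty K with rfl | hKne
      · simp
      by_cases hKeq : K = S
      · subst hKeq
        rw [keyS]
        exact hbig
      · have := key K hKS hKne hKeq
        omega
    have hradoc : ∀ K ⊆ S,
        K.card ≤ ∑ i : Fin n, rnk (A i)
          (K.filter (fun x => i ∈ (Finset.univ : Finset (Fin n)))) := by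
      intro K hK
      have e : ∀ i : Fin n, K.filter (fun x => i ∈ (Finset.univ : Finset (Fin n))) = K := by
        intro i
        apply Finset.filter_true_of_mem
        intro x _
        exact Finset.mem_univ i
      rw [Finset.sum_congr rfl (fun i _ => by rw [e i])]
      exact hcond K hK
    obtain ⟨f, hfS', hblocks⟩ := rado hn (fun i K => rnk (A i) K)
      (fun i => rnk_empty (A i)) (fun i K K' h => rnk_mono (A i) h)
      (fun i K K' => rnk_submodular (A i) K K') S
      (∑ x ∈ S, (Finset.univ : Finset (Fin n)).card) (fun _ => Finset.univ)
      le_rfl hradoc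
    have hchoice : ∀ i : Fin n, ∃ a ∈ A i, ∀ x ∈ S.filter (fun x => f x = i), a x = -1 :=
      fun i => exists_neg_one (A i) _ (hblocks i)
    choose aa haaA haaval using hchoice
    have hzero : ∀ x ∈ S, ∏ i : Fin n, (aa i x + 1) = 0 := by
      intro x hx
      apply Finset.prod_eq_zero (Finset.mem_univ (f x))
      have hxblk : x ∈ S.filter (fun y => f y = f x) := Finset.mem_filter.mpr ⟨hx, rfl⟩
      rw [haaval (f x) x hxblk]
      ring
    have hexpand : ∑ x ∈ S, ∏ i : Fin n, (aa i x + 1) = (S.card : ℂ) := by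
      have e1 : ∀ x : Fin k, ∏ i : Fin n, (aa i x + 1)
          = ∑ t ∈ (Finset.univ : Finset (Fin n)).powerset, ∏ i ∈ t, aa i x := by
        intro x
        rw [Finset.prod_add]
        exact Finset.sum_congr rfl (fun t ht => by simp)
      rw [Finset.sum_congr rfl (fun x _ => e1 x), Finset.sum_comm]
      have e2 : ∀ t ∈ (Finset.univ : Finset (Fin n)).powerset, t ≠ ∅ →
          ∑ x ∈ S, ∏ i ∈ t, aa i x = 0 := by
        intro t _ htne
        have htne' : t.Nonempty := Finset.nonempty_iff_ne_empty.mpr htne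
        have hfull := hA t htne' aa (fun i _ => haaA i)
        have hext : ∑ x ∈ S, ∏ i ∈ t, aa i x = ∑ x : Fin k, ∏ i ∈ t, aa i x := by
          apply Finset.sum_subset (Finset.subset_univ S)
          intro x _ hxS
          obtain ⟨i0, hi0⟩ := htne'
          exact Finset.prod_eq_zero hi0 (hsupp i0 (aa i0) (haaA i0) x hxS)
        rw [hext, hfull]
      rw [Finset.sum_eq_single_of_mem ∅
        (Finset.mem_powerset.mpr (Finset.empty_subset _)) (fun t ht htne => e2 t ht htne)]
      simp
    have hzsum : (S.card : ℂ) = 0 := by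
      rw [← hexpand]
      exact Finset.sum_eq_zero hzero
    have : S.card = 0 := Nat.cast_eq_zero.mp hzsum
    omega

end SumDim

/-- Let `k ≥ 1`, `n ≥ 1`, and let `A_1, …, A_n ⊆ ℂ^k` be linear subspaces such that for every
nonempty subset `I ⊆ {1, …, n}` and every choice of vectors `a i ∈ A i` for `i ∈ I`, one has
`∑_{j=1}^{k} ∏_{i ∈ I} (a i)_j = 0`.  Then `∑ i dim (A i) ≤ k - 1`. -/
theorem sum_dim_le_of_product_condition
    (k n : ℕ) (hk : 1 ≤ k) (hn : 1 ≤ n)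
    (A : Fin n → Submodule ℂ (Fin k → ℂ))
    (hA : ∀ (I : Finset (Fin n)), I.Nonempty →
      ∀ (a : Fin n → (Fin k → ℂ)), (∀ i ∈ I, a i ∈ A i) →
      ∑ j : Fin k, ∏ i ∈ I, a i j = 0) :
    ∑ i : Fin n, Module.finrank ℂ (A i) ≤ k - 1 := by
  have hne : Nonempty (Fin k) := ⟨⟨0, hk⟩⟩
  have huniv : (Finset.univ : Finset (Fin k)).Nonempty := Finset.univ_nonempty
  have h := SumDim.master hn k Finset.univ (by simp) huniv A
    (fun i a _ x hx => absurd (Finset.mem_univ x) hx) hA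
  simpa using h
end

section
/- Let k ≥ 1 and let f_1, …, f_k be nonzero formal Laurent series in ℂ((T)), with f_i' denoting the formal derivative of f_i and f_i^{-1} its multiplicative inverse in the field ℂ((T)). Suppose that for all integers m and n one has ∑_{i=1}^{k} (coefficient of T^m in f_i') · (coefficient of T^n in f_i^{-1}) = 0; equivalently, the two-variable expression ∑_{i=1}^{k} f_i'(S) · f_i(T)^{-1} vanishes identically. Then every f_i has order 0, i.e., the coefficient of T^0 in f_i is nonzero and f_i has no nonzero coefficients in negative degrees. -/
lemma inv_order_facts (g : LaurentSeries ℂ) (hg : g ≠ 0) :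
    g⁻¹.order = -g.order ∧ g.coeff g.order * g⁻¹.coeff (-g.order) = 1 := by
  have hinv : g⁻¹ ≠ 0 := inv_ne_zero hg
  have hm : g * g⁻¹ = 1 := mul_inv_cancel₀ hg
  have h1 := HahnSeries.coeff_mul_order_add_order g g⁻¹
  rw [hm, HahnSeries.leadingCoeff_eq, HahnSeries.leadingCoeff_eq] at h1
  have hne : g.coeff g.order * g⁻¹.coeff g⁻¹.order ≠ 0 :=
    mul_ne_zero (HahnSeries.coeff_order_eq_zero.not.mpr hg) (HahnSeries.coeff_order_eq_zero.not.mpr hinv)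
  have hz : g.order + g⁻¹.order = 0 := by
    by_contra hc
    rw [HahnSeries.coeff_one, if_neg hc] at h1
    exact hne h1.symm
  have ho : g⁻¹.order = -g.order := by omega
  refine ⟨ho, ?_⟩
  rw [HahnSeries.coeff_one, if_pos hz] at h1
  rw [← ho]; exact h1.symm

/-- Let `k ≥ 1` and let `f_1, …, f_k` be nonzero formal Laurent series in `ℂ((T))`.
Suppose that for all integers `m` and `n`,
`∑_{i=1}^{k} (coeff of T^m in f_i') * (coeff of T^n in f_i⁻¹) = 0`,
where the coefficient of `T^m` in the formal derivative `f_i'` is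
`(m+1) * (coeff of T^(m+1) in f_i)`.  Then every `f_i` has order `0`:
its coefficient of `T^0` is nonzero and all its coefficients in negative
degrees vanish. -/
theorem laurentSeries_order_eq_zero_of_deriv_orthogonality
    (k : ℕ) (hk : 1 ≤ k) (f : Fin k → LaurentSeries ℂ) (hf : ∀ i, f i ≠ 0)
    (h : ∀ m n : ℤ,
      ∑ i : Fin k, (((m + 1 : ℤ) : ℂ) * (f i).coeff (m + 1)) * ((f i)⁻¹).coeff n = 0) :
    ∀ i, (f i).coeff 0 ≠ 0 ∧ ∀ n : ℤ, n < 0 → (f i).coeff n = 0 := by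
  -- every order equals 0
  have hord : ∀ i, (f i).order = 0 := by
    intro i
    set v : ℤ := (f i).order with hv
    have hsum := h (v - 1) (-v)
    have hterm : ∀ j, (((v - 1 + 1 : ℤ) : ℂ) * (f j).coeff (v - 1 + 1)) * ((f j)⁻¹).coeff (-v)
        = if (f j).order = v then (v : ℂ) else 0 := by
      intro j
      have hsimp : (v - 1 + 1 : ℤ) = v := by ring
      rw [hsimp]
      obtain ⟨ho, hc⟩ := inv_order_facts (f j) (hf j)
      rcases lt_trichotomy (f j).order v with hlt | heq | hgt
      · have : ((f j)⁻¹).coeff (-v) = 0 := by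
          apply HahnSeries.coeff_eq_zero_of_lt_order
          rw [ho]; omega
        rw [this, if_neg (by omega), mul_zero]
      · rw [if_pos heq, ← heq, mul_assoc, hc, mul_one]
      · have : (f j).coeff v = 0 := HahnSeries.coeff_eq_zero_of_lt_order hgt
        rw [this, if_neg (by omega), mul_zero, zero_mul]
    rw [Finset.sum_congr rfl (fun j _ => hterm j)] at hsum
    rw [← Finset.sum_filter, Finset.sum_const, nsmul_eq_mul] at hsum
    have hmem : i ∈ Finset.univ.filter (fun j => (f j).order = v) := by
      simp [hv]
    have hcard : (Finset.univ.filter (fun j => (f j).order = v)).card ≠ 0 :=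
      Finset.card_ne_zero_of_mem hmem
    have : (v : ℂ) = 0 := by
      rcases mul_eq_zero.mp hsum with hc | hc
      · exact absurd (by exact_mod_cast hc) hcard
      · exact hc
    exact_mod_cast this
  intro i
  constructor
  · have := HahnSeries.coeff_order_eq_zero.not.mpr (hf i)
    rwa [hord i] at this
  · intro n hn
    apply HahnSeries.coeff_eq_zero_of_lt_order
    rw [hord i]; exact hn
end
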